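/- Define $T \circ N: \mathbb{C}^3 \to \mathbb{C}^3$ by $(x,y,z) \mapsto (z,\; y - z(y^2+zx),\; x + 2y(y^2+zx) - z(y^2+zx)^2)$, where $N$ is the Nagata automorphism and $T$ swaps $x$ and $z$. Then for every positive integer $n$, $\operatorname{mdeg}\left((T\circ N)^n\right) = (4n-3,\, 4n-1,\, 4n+1)$. -/

import Mathlib

open MvPolynomial

/-- A polynomial self-map of `ℂⁿ`, given by its coordinate functions. -/
abbrev PolyMap (n : ℕ) := Fin n → MvPolynomial (Fin n) ℂ

/-- Composition of polynomial maps: `(F.comp G)` is `F ∘ G` (apply `G` first). -/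
noncomputable def PolyMap.comp {n : ℕ} (F G : PolyMap n) : PolyMap n :=
  fun i => aeval G (F i)

/-- The identity polynomial map. -/
noncomputable def PolyMap.id (n : ℕ) : PolyMap n := fun i => X i

/-- A polynomial map is an automorphism if it has a polynomial inverse. -/
def PolyMap.IsAutomorphism {n : ℕ} (F : PolyMap n) : Prop :=
  ∃ G : PolyMap n, F.comp G = PolyMap.id n ∧ G.comp F = PolyMap.id n

/-- Affine automorphisms: automorphisms all of whose coordinates have degree ≤ 1. -/
def PolyMap.IsAffine {n : ℕ} (F : PolyMap n) : Prop :=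
  F.IsAutomorphism ∧ ∀ i, (F i).totalDegree ≤ 1

/-- Elementary maps: add to one coordinate a polynomial in the other coordinates. -/
def PolyMap.IsElementary {n : ℕ} (F : PolyMap n) : Prop :=
  ∃ (i : Fin n) (p : MvPolynomial (Fin n) ℂ),
    p ∈ supported ℂ ({i}ᶜ : Set (Fin n)) ∧
    F = Function.update (fun j => (X j : MvPolynomial (Fin n) ℂ)) i (X i + p)

/-- Tame maps: finite compositions of affine automorphisms and elementary maps. -/
inductive PolyMap.IsTame {n : ℕ} : PolyMap n → Prop
  | affine {F : PolyMap n} : F.IsAffine → F.IsTame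
  | elementary {F : PolyMap n} : F.IsElementary → F.IsTame
  | comp {F G : PolyMap n} : F.IsTame → G.IsTame → (F.comp G).IsTame

/-- The multidegree of a polynomial map. -/
noncomputable def PolyMap.mdeg {n : ℕ} (F : PolyMap n) : Fin n → ℕ :=
  fun i => (F i).totalDegree

/-- The map `T ∘ N`, where `N` is the Nagata automorphism and `T` swaps `x` and `z`. -/
noncomputable def TN : PolyMap 3 :=
  ![X 2,
    X 1 - X 2 * (X 1 ^ 2 + X 2 * X 0),
    X 0 + 2 * X 1 * (X 1 ^ 2 + X 2 * X 0) - X 2 * (X 1 ^ 2 + X 2 * X 0) ^ 2]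

/-- The `n`-fold composition of `T ∘ N` with itself. -/
noncomputable def TNpow : ℕ → PolyMap 3
  | 0 => PolyMap.id 3
  | (k + 1) => PolyMap.comp TN (TNpow k)

/-! ### Auxiliary degree lemmas -/

section Aux

variable {σ : Type*}

lemma top_ne_zero {p : MvPolynomial σ ℂ} (hp : p ≠ 0) :
    homogeneousComponent p.totalDegree p ≠ 0 := by
  classical
  obtain ⟨d, hd, hdeg⟩ := p.support.exists_mem_eq_sup
    (MvPolynomial.support_nonempty.mpr hp) (fun m => m.sum fun _ e => e)
  intro h
  have := coeff_homogeneousComponent (R := ℂ) p.totalDegree p d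
  rw [h] at this
  simp only [coeff_zero] at this
  have hdd : d.degree = p.totalDegree := by
    rw [totalDegree, hdeg]; rfl
  rw [if_pos hdd] at this
  exact (mem_support_iff.mp hd) this.symm

lemma degadd (x y : σ →₀ ℕ) : (x + y).degree = x.degree + y.degree := by
  classical
  simp [Finsupp.degree_eq_weight_one, map_add]

/-- In a domain, total degree is additive on products. -/
lemma tdm {p r : MvPolynomial σ ℂ} (hp : p ≠ 0) (hr : r ≠ 0) :
    (p * r).totalDegree = p.totalDegree + r.totalDegree := by
  classical
  refine le_antisymm (totalDegree_mul p r) ?_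
  set a := p.totalDegree
  set b := r.totalDegree
  have key : homogeneousComponent (a + b) (p * r)
      = homogeneousComponent a p * homogeneousComponent b r := by
    ext d
    rw [coeff_homogeneousComponent, coeff_mul, coeff_mul]
    split_ifs with hdeg
    · refine Finset.sum_congr rfl fun x hx => ?_
      rw [Finset.HasAntidiagonal.mem_antidiagonal] at hx
      rw [coeff_homogeneousComponent, coeff_homogeneousComponent]
      have hsum : x.1.degree + x.2.degree = a + b := by
        rw [← degadd, hx, hdeg]
      by_cases h1 : x.1.degree = a
      · have h2 : x.2.degree = b := by omega
        rw [if_pos h1, if_pos h2]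
      · rcases lt_or_gt_of_ne h1 with hlt | hgt
        · have h2 : b < x.2.degree := by omega
          rw [coeff_eq_zero_of_totalDegree_lt h2, if_neg h1, mul_zero, zero_mul]
        · rw [coeff_eq_zero_of_totalDegree_lt hgt, if_neg h1, zero_mul, zero_mul]
    · refine (Finset.sum_eq_zero fun x hx => ?_).symm
      rw [Finset.HasAntidiagonal.mem_antidiagonal] at hx
      rw [coeff_homogeneousComponent, coeff_homogeneousComponent]
      split_ifs with h1 h2
      · exfalso; apply hdeg; rw [← hx, degadd, h1, h2]
      all_goals simp
  by_contra hlt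
  push_neg at hlt
  have : homogeneousComponent (a + b) (p * r) = 0 :=
    homogeneousComponent_eq_zero _ _ hlt
  rw [key] at this
  exact mul_ne_zero (top_ne_zero hp) (top_ne_zero hr) this

lemma tds {p r : MvPolynomial σ ℂ} (h : p.totalDegree < r.totalDegree) :
    (p - r).totalDegree = r.totalDegree := by
  rw [sub_eq_add_neg, totalDegree_add_eq_right_of_totalDegree_lt (by rwa [totalDegree_neg]),
    totalDegree_neg]

end Aux

/-- The Nagata invariant `y² + zx`. -/
noncomputable def qq : MvPolynomial (Fin 3) ℂ := X 1 ^ 2 + X 2 * X 0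

lemma qq_totalDegree : qq.totalDegree = 2 := by
  refine le_antisymm ?_ ?_
  · refine (totalDegree_add _ _).trans ?_
    simp only [totalDegree_X_pow, max_le_iff, le_refl, true_and]
    exact (totalDegree_mul _ _).trans (by simp [totalDegree_X])
  · have h : coeff (Finsupp.single 1 2) qq = 1 := by
      rw [qq, coeff_add, coeff_X_pow]
      rw [show (X 2 * X 0 : MvPolynomial (Fin 3) ℂ)
          = monomial (Finsupp.single 2 1 + Finsupp.single 0 1) 1 by
        simp [X, monomial_mul]]
      rw [coeff_monomial, if_pos rfl, if_neg ?_]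
      · simp
      · intro h
        have := DFunLike.congr_fun h 1
        simp [Finsupp.single_apply] at this
    have := le_totalDegree (p := qq) (s := Finsupp.single 1 2)
      (by simp [mem_support_iff, h])
    simpa using this

lemma qq_ne_zero : qq ≠ 0 := by
  intro h
  have := qq_totalDegree
  rw [h] at this
  simp at this

lemma TNpow_succ_0 (n : ℕ) : TNpow (n+1) 0 = TNpow n 2 := by
  simp [TNpow, PolyMap.comp, TN, map_ofNat]

lemma TNpow_succ_1 (n : ℕ) :
    TNpow (n+1) 1 = TNpow n 1 - TNpow n 2 * ((TNpow n 1)^2 + TNpow n 2 * TNpow n 0) := by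
  simp [TNpow, PolyMap.comp, TN, map_ofNat]

lemma TNpow_succ_2 (n : ℕ) :
    TNpow (n+1) 2 = TNpow n 0 + 2 * TNpow n 1 * ((TNpow n 1)^2 + TNpow n 2 * TNpow n 0)
      - TNpow n 2 * ((TNpow n 1)^2 + TNpow n 2 * TNpow n 0)^2 := by
  simp [TNpow, PolyMap.comp, TN, map_ofNat]

lemma TNpow_inv (n : ℕ) : (TNpow n 1)^2 + TNpow n 2 * TNpow n 0 = qq := by
  induction n with
  | zero => simp [TNpow, PolyMap.id, qq]
  | succ k ih =>
    rw [TNpow_succ_0, TNpow_succ_1, TNpow_succ_2, ← ih]; ring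

/-- The bounded form of the degree invariant. -/
lemma TNpow_deg (n : ℕ) :
    (TNpow n 0).totalDegree ≤ 4*n + 1 ∧ (TNpow n 1).totalDegree ≤ 4*n + 1 ∧
      (TNpow n 2).totalDegree = 4*n + 1 := by
  induction n with
  | zero =>
    refine ⟨?_, ?_, ?_⟩ <;> simp [TNpow, PolyMap.id, totalDegree_X]
  | succ k ih =>
    obtain ⟨h0, h1, h2⟩ := ih
    have hTne : TNpow k 2 ≠ 0 := by
      intro h; rw [h] at h2; simp at h2
    have hq2 : (qq ^ 2).totalDegree = 4 := by
      rw [sq, tdm qq_ne_zero qq_ne_zero, qq_totalDegree]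
    have hq2ne : (qq : MvPolynomial (Fin 3) ℂ) ^ 2 ≠ 0 := pow_ne_zero _ qq_ne_zero
    have hmul : (TNpow k 2 * qq).totalDegree = 4*k + 3 := by
      rw [tdm hTne qq_ne_zero, h2, qq_totalDegree]
    have hmul2 : (TNpow k 2 * qq ^ 2).totalDegree = 4*k + 5 := by
      rw [tdm hTne hq2ne, h2, hq2]
    refine ⟨?_, ?_, ?_⟩
    · rw [TNpow_succ_0]; omega
    · rw [TNpow_succ_1, TNpow_inv, tds (by omega : (TNpow k 1).totalDegree
        < (TNpow k 2 * qq).totalDegree)]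
      omega
    · rw [TNpow_succ_2, TNpow_inv]
      have hA : (TNpow k 0 + 2 * TNpow k 1 * qq).totalDegree ≤ 4*k + 3 := by
        refine (totalDegree_add _ _).trans (max_le (by omega) ?_)
        have : (2 * TNpow k 1 * qq : MvPolynomial (Fin 3) ℂ)
            = (TNpow k 1 + TNpow k 1) * qq := by ring
        rw [this]
        refine (totalDegree_mul _ _).trans ?_
        have := (totalDegree_add (TNpow k 1) (TNpow k 1)).trans
          (max_le h1 h1)
        rw [qq_totalDegree]; omega
      rw [tds (by omega : (TNpow k 0 + 2 * TNpow k 1 * qq).totalDegree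
        < (TNpow k 2 * qq ^ 2).totalDegree), hmul2]
      omega

/-- The exact degrees at a successor step. -/
lemma TNpow_deg_exact (k : ℕ) :
    (TNpow (k+1) 0).totalDegree = 4*k + 1 ∧ (TNpow (k+1) 1).totalDegree = 4*k + 3 ∧
      (TNpow (k+1) 2).totalDegree = 4*k + 5 := by
  obtain ⟨h0, h1, h2⟩ := TNpow_deg k
  have hTne : TNpow k 2 ≠ 0 := by
    intro h; rw [h] at h2; simp at h2
  have hmul : (TNpow k 2 * qq).totalDegree = 4*k + 3 := by
    rw [tdm hTne qq_ne_zero, h2, qq_totalDegree]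
  have h2' := (TNpow_deg (k+1)).2.2
  refine ⟨?_, ?_, ?_⟩
  · rw [TNpow_succ_0]; omega
  · rw [TNpow_succ_1, TNpow_inv, tds (by omega), hmul]
  · omega

theorem mdeg_TN_pow (n : ℕ) (hn : 1 ≤ n) :
    (TNpow n).mdeg = ![4 * n - 3, 4 * n - 1, 4 * n + 1] := by
  obtain ⟨k, rfl⟩ : ∃ k, n = k + 1 := ⟨n - 1, by omega⟩
  obtain ⟨h0, h1, h2⟩ := TNpow_deg_exact k
  funext i
  fin_cases i
  · show (TNpow (k+1) 0).totalDegree = 4 * (k+1) - 3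
    rw [h0]; omega
  · show (TNpow (k+1) 1).totalDegree = 4 * (k+1) - 1
    rw [h1]; omega
  · show (TNpow (k+1) 2).totalDegree = 4 * (k+1) + 1
    rw [h2]; omega
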